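/- arXiv:2302.00416 — 4 statements merged into one kernel-verified Lean document; each statement's English description precedes it below -/
import Mathlib

section
/- Let Z be a translation invariant valuation on the space of compact intervals [a,b] ⊆ ℝ (including degenerate singletons). Then there exist a constant c₀ ∈ ℝ and an additive function ζ : [0,∞) → ℝ (satisfying ζ(x+y) = ζ(x) + ζ(y)) such that Z([a,b]) = c₀ + ζ(b − a) for all a ≤ b. -/
theorem stmt_3 (Z : Set ℝ → ℝ)
    (hval : ∀ a b c d : ℝ, a ≤ b → c ≤ d → max a c ≤ min b d →
      Z (Set.Icc a b) + Z (Set.Icc c d) =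
        Z (Set.Icc a b ∪ Set.Icc c d) + Z (Set.Icc a b ∩ Set.Icc c d))
    (htrans : ∀ a b t : ℝ, Z (Set.Icc (a + t) (b + t)) = Z (Set.Icc a b)) :
    ∃ (c₀ : ℝ) (ζ : ℝ → ℝ),
      (∀ x y : ℝ, 0 ≤ x → 0 ≤ y → ζ (x + y) = ζ x + ζ y) ∧
      ∀ a b : ℝ, a ≤ b → Z (Set.Icc a b) = c₀ + ζ (b - a) := by
  refine ⟨Z (Set.Icc 0 0), fun x => Z (Set.Icc 0 x) - Z (Set.Icc 0 0), ?_, ?_⟩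
  · intro x y hx hy
    have h := hval 0 x x (x + y) hx (by linarith) (by simp [hx, hy])
    have hu : Set.Icc (0:ℝ) x ∪ Set.Icc x (x + y) = Set.Icc 0 (x + y) :=
      Set.Icc_union_Icc_eq_Icc hx (by linarith)
    have hi : Set.Icc (0:ℝ) x ∩ Set.Icc x (x + y) = Set.Icc x x := by
      rw [Set.Icc_inter_Icc]
      congr 1 <;> simp [hx, hy] <;> linarith
    rw [hu, hi] at h
    have h2 : Z (Set.Icc x (x + y)) = Z (Set.Icc 0 y) := by
      have := htrans 0 y x
      simpa [add_comm] using this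
    have h3 : Z (Set.Icc x x) = Z (Set.Icc 0 0) := by
      have := htrans 0 0 x
      simpa using this
    rw [h2, h3] at h
    simp only []
    linarith
  · intro a b hab
    have := htrans 0 (b - a) a
    simp only [zero_add, sub_add_cancel] at this
    rw [this]
    simp only []
    ring
end

section
/- Let Z be a continuous, translation invariant valuation on compact intervals of ℝ. Then there exist constants c₀, c₁ ∈ ℝ such that Z([a,b]) = c₀ + c₁(b − a) for all a ≤ b. -/
theorem stmt_4 (Z : Set ℝ → ℝ)
    (hval : ∀ a b c d : ℝ, a ≤ b → c ≤ d → max a c ≤ min b d →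
      Z (Set.Icc a b) + Z (Set.Icc c d) =
        Z (Set.Icc a b ∪ Set.Icc c d) + Z (Set.Icc a b ∩ Set.Icc c d))
    (htrans : ∀ a b t : ℝ, Z (Set.Icc (a + t) (b + t)) = Z (Set.Icc a b))
    (hcont : Continuous fun p : {p : ℝ × ℝ // p.1 ≤ p.2} => Z (Set.Icc p.1.1 p.1.2)) :
    ∃ c₀ c₁ : ℝ, ∀ a b : ℝ, a ≤ b → Z (Set.Icc a b) = c₀ + c₁ * (b - a) := by
  set f : ℝ → ℝ := fun l => Z (Set.Icc 0 l) with hfdef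
  -- additivity of f on nonnegatives
  have fadd : ∀ s t : ℝ, 0 ≤ s → 0 ≤ t → f (s + t) + f 0 = f s + f t := by
    intro s t hs ht
    have h1 := hval 0 s s (s + t) hs (by linarith)
      (by rw [max_eq_right hs, min_eq_left (by linarith)])
    rw [Set.Icc_union_Icc_eq_Icc hs (by linarith), Set.Icc_inter_Icc,
      max_eq_right hs, min_eq_left (by linarith : s ≤ s + t)] at h1
    have h2 : Z (Set.Icc s (s + t)) = Z (Set.Icc 0 t) := by
      have := htrans 0 t s; simpa [add_comm] using this
    have h3 : Z (Set.Icc s s) = Z (Set.Icc 0 0) := by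
      have := htrans 0 0 s; simpa using this
    simp only [hfdef]
    linarith [h1, h2, h3]
  -- define g
  set g : ℝ → ℝ := fun x => f (max x 0) - f 0 with hgdef
  have gcont : Continuous g := by
    have hφ : Continuous (fun x : ℝ => (⟨(0, max x 0), le_max_right x 0⟩ :
        {p : ℝ × ℝ // p.1 ≤ p.2})) :=
      Continuous.subtype_mk (continuous_const.prodMk (continuous_id.max continuous_const)) _
    exact (hcont.comp hφ).sub continuous_const
  have gneg : ∀ x : ℝ, x ≤ 0 → g x = 0 := by
    intro x hx; simp [hgdef, max_eq_right hx]
  have gpos : ∀ x : ℝ, 0 ≤ x → g x = f x - f 0 := by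
    intro x hx; simp [hgdef, max_eq_left hx]
  have gadd : ∀ s t : ℝ, 0 ≤ s → 0 ≤ t → g (s + t) = g s + g t := by
    intro s t hs ht
    rw [gpos _ hs, gpos _ ht, gpos _ (by linarith)]
    linarith [fadd s t hs ht]
  -- extend to an additive map
  set h : ℝ → ℝ := fun x => g x - g (-x) with hhdef
  have hadd : ∀ x y : ℝ, h (x + y) = h x + h y := by
    intro x y
    simp only [hhdef]
    rcases le_total 0 x with hx | hx <;> rcases le_total 0 y with hy | hy
    · have := gadd x y hx hy
      rw [gneg (-x) (by linarith), gneg (-y) (by linarith), gneg (-(x+y)) (by linarith)]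
      linarith
    · rcases le_total 0 (x + y) with hxy | hxy
      · have := gadd (x + y) (-y) hxy (by linarith)
        rw [show x + y + -y = x by ring] at this
        rw [gneg (-x) (by linarith), gneg y hy, gneg (-(x+y)) (by linarith)]
        linarith
      · have := gadd x (-(x + y)) hx (by linarith)
        rw [show x + -(x + y) = -y by ring] at this
        rw [gneg (-x) (by linarith), gneg y hy, gneg (x+y) hxy]
        linarith
    · rcases le_total 0 (x + y) with hxy | hxy
      · have := gadd (x + y) (-x) hxy (by linarith)
        rw [show x + y + -x = y by ring] at this
        rw [gneg x hx, gneg (-y) (by linarith), gneg (-(x+y)) (by linarith)]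
        linarith
      · have := gadd y (-(x + y)) hy (by linarith)
        rw [show y + -(x + y) = -x by ring] at this
        rw [gneg x hx, gneg (-y) (by linarith), gneg (x+y) hxy]
        linarith
    · have := gadd (-x) (-y) (by linarith) (by linarith)
      rw [show -x + -y = -(x + y) by ring] at this
      rw [gneg x hx, gneg y hy, gneg (x+y) (by linarith)]
      linarith
  have h0 : h 0 = 0 := by simp [hhdef]
  set H : ℝ →+ ℝ := AddMonoidHom.mk' h hadd with hHdef
  have Hcont : Continuous H := by
    show Continuous h
    exact gcont.sub (gcont.comp continuous_neg)
  have hlin : ∀ x : ℝ, h x = x * h 1 := by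
    intro x
    have := (H.toRealLinearMap Hcont).map_smul x 1
    simp [smul_eq_mul, mul_one] at this; exact this
  refine ⟨f 0, h 1, fun a b hab => ?_⟩
  have hZ : Z (Set.Icc a b) = Z (Set.Icc 0 (b - a)) := by
    have := htrans 0 (b - a) a
    simpa using this
  have hg : g (b - a) = f (b - a) - f 0 := gpos _ (by linarith)
  have hh : h (b - a) = g (b - a) := by
    rw [hhdef]; simp only
    rw [gneg (-(b - a)) (by linarith)]; ring
  have hl := hlin (b - a)
  rw [hh, hg] at hl
  rw [hZ]
  show f (b - a) = f 0 + h 1 * (b - a)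
  linear_combination hl
end

section
/- Let S = {x₀ + Σᵢ rᵢ xᵢ : 1 ≥ r₁ ≥ ⋯ ≥ rₙ ≥ 0} be an n-dimensional simplex in ℝⁿ (with x₁,…,xₙ linearly independent). For 0 < t < 1 and 0 ≤ k ≤ n, define Qₖ(t) := {x₀ + Σᵢ tᵢ xᵢ : 1 ≥ t₁ ≥ ⋯ ≥ tₖ ≥ t ≥ t_{k+1} ≥ ⋯ ≥ tₙ ≥ 0}. Then S = ⋃ₖ Qₖ(t), and for i < k the intersection Qᵢ(t) ∩ Qₖ(t) has empty interior. -/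
/-- The simplex `{x₀ + Σ rᵢ xᵢ : 1 ≥ r₁ ≥ ⋯ ≥ rₙ ≥ 0}`. -/
def simplexSet {n : ℕ} (x₀ : EuclideanSpace ℝ (Fin n))
    (x : Fin n → EuclideanSpace ℝ (Fin n)) : Set (EuclideanSpace ℝ (Fin n)) :=
  {y | ∃ r : Fin n → ℝ, Antitone r ∧ (∀ i, r i ∈ Set.Icc (0 : ℝ) 1) ∧
    y = x₀ + ∑ i, r i • x i}

/-- The piece `Qₖ(t) = {x₀ + Σ tᵢ xᵢ : 1 ≥ t₁ ≥ ⋯ ≥ tₖ ≥ t ≥ t_{k+1} ≥ ⋯ ≥ tₙ ≥ 0}`. -/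
def simplexPiece {n : ℕ} (x₀ : EuclideanSpace ℝ (Fin n))
    (x : Fin n → EuclideanSpace ℝ (Fin n)) (t : ℝ) (k : Fin (n + 1)) :
    Set (EuclideanSpace ℝ (Fin n)) :=
  {y | ∃ r : Fin n → ℝ, Antitone r ∧ (∀ i, r i ∈ Set.Icc (0 : ℝ) 1) ∧
    (∀ i : Fin n, (i : ℕ) < (k : ℕ) → t ≤ r i) ∧
    (∀ i : Fin n, (k : ℕ) ≤ (i : ℕ) → r i ≤ t) ∧
    y = x₀ + ∑ i, r i • x i}

/-- Coefficients in a linearly independent expansion are unique. -/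
lemma coeff_eq {n : ℕ} {x₀ : EuclideanSpace ℝ (Fin n)}
    {x : Fin n → EuclideanSpace ℝ (Fin n)} (hx : LinearIndependent ℝ x)
    {a b : Fin n → ℝ} (h : x₀ + ∑ i, a i • x i = x₀ + ∑ i, b i • x i) : a = b := by
  have h' : ∑ i, a i • x i = ∑ i, b i • x i := add_left_cancel h
  have h2 : ∑ i, (a i - b i) • x i = 0 := by
    simp only [sub_smul, Finset.sum_sub_distrib, h', sub_self]
  have h3 := Fintype.linearIndependent_iff.mp hx (fun i => a i - b i) h2
  funext i
  have := h3 i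
  linarith

theorem stmt_6 {n : ℕ} (x₀ : EuclideanSpace ℝ (Fin n))
    (x : Fin n → EuclideanSpace ℝ (Fin n)) (hx : LinearIndependent ℝ x)
    (t : ℝ) (ht : 0 < t) (ht1 : t < 1) :
    (simplexSet x₀ x = ⋃ k : Fin (n + 1), simplexPiece x₀ x t k) ∧
    ∀ i k : Fin (n + 1), i < k →
      interior (simplexPiece x₀ x t i ∩ simplexPiece x₀ x t k) = ∅ := by
  constructor
  · ext y
    constructor
    · rintro ⟨r, hr, hr01, rfl⟩
      rw [Set.mem_iUnion]
      by_cases h : ∀ i, t ≤ r i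
      · exact ⟨⟨n, Nat.lt_succ_self n⟩, r, hr, hr01, fun i _ => h i,
          fun i hi => absurd i.isLt (by simp only [Fin.val_mk] at hi; omega), rfl⟩
      · push_neg at h
        have hne : (Finset.univ.filter (fun i => r i < t)).Nonempty := by
          obtain ⟨i, hi⟩ := h
          exact ⟨i, by simp [hi]⟩
        set i₀ := (Finset.univ.filter (fun i => r i < t)).min' hne with hi₀
        have hi₀mem : r i₀ < t := by
          have := (Finset.univ.filter (fun i => r i < t)).min'_mem hne
          simpa using this
        refine ⟨⟨i₀.val, by omega⟩, r, hr, hr01, ?_, ?_, rfl⟩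
        · intro j hj
          by_contra hc
          push_neg at hc
          have : i₀ ≤ j := Finset.min'_le _ j (by simp [hc])
          simp at hj
          omega
        · intro j hj
          have : i₀ ≤ j := by
            simp at hj
            exact Fin.le_def.mpr hj
          exact le_of_lt (lt_of_le_of_lt (hr this) hi₀mem)
    · rw [Set.mem_iUnion]
      rintro ⟨k, r, hr, hr01, _, _, rfl⟩
      exact ⟨r, hr, hr01, rfl⟩
  · intro i k hik
    -- index j₀ with i ≤ j₀ < k
    have hkn : (k : ℕ) ≤ n := Nat.lt_succ_iff.mp k.isLt
    have hin : (i : ℕ) < n := lt_of_lt_of_le hik hkn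
    set j₀ : Fin n := ⟨i, hin⟩ with hj₀
    -- key: any point in the intersection has coefficient t at j₀ (and its rep. is unique)
    have key : ∀ y ∈ simplexPiece x₀ x t i ∩ simplexPiece x₀ x t k,
        ∃ r : Fin n → ℝ, r j₀ = t ∧ y = x₀ + ∑ j, r j • x j := by
      rintro y ⟨⟨r, hr, hr01, _, hle, hy⟩, ⟨s, hs, hs01, hge, _, hy'⟩⟩
      have hrs : r = s := coeff_eq hx (hy ▸ hy')
      have h1 : r j₀ ≤ t := hle j₀ (le_refl _)
      have h2 : t ≤ s j₀ := hge j₀ (by simp [hj₀]; exact hik)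
      exact ⟨r, le_antisymm h1 (hrs ▸ h2), hy⟩
    ext y
    simp only [Set.mem_empty_iff_false, iff_false]
    intro hy
    obtain ⟨ε, hε, hball⟩ := Metric.isOpen_iff.mp isOpen_interior y hy
    have hball' : Metric.ball y ε ⊆ simplexPiece x₀ x t i ∩ simplexPiece x₀ x t k :=
      hball.trans interior_subset
    have hymem := hball' (Metric.mem_ball_self hε)
    obtain ⟨r, hrj₀, hyeq⟩ := key y hymem
    set δ : ℝ := ε / (‖x j₀‖ + 1) with hδ
    have hnorm : (0:ℝ) < ‖x j₀‖ + 1 := by positivity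
    have hδpos : 0 < δ := div_pos hε hnorm
    have hδnorm : δ * ‖x j₀‖ < ε := by
      rw [hδ, div_mul_eq_mul_div, div_lt_iff₀ hnorm]
      nlinarith [norm_nonneg (x j₀)]
    set y' := y + δ • x j₀ with hy'
    have hy'ball : y' ∈ Metric.ball y ε := by
      rw [Metric.mem_ball, dist_eq_norm]
      simp [hy', norm_smul, abs_of_pos hδpos]
      exact hδnorm
    obtain ⟨s, hsj₀, hy'eq⟩ := key y' (hball' hy'ball)
    -- y' = x₀ + ∑ (r + δ·1_{j₀}) • x
    have hrep : y' = x₀ + ∑ j, (r j + if j = j₀ then δ else 0) • x j := by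
      rw [hy', hyeq]
      simp only [add_smul, Finset.sum_add_distrib, ite_smul, zero_smul]
      rw [Finset.sum_ite_eq' Finset.univ j₀ (fun j => δ • x j)]
      simp only [Finset.mem_univ, if_true]
      abel
    have := coeff_eq hx (hy'eq ▸ hrep)
    have := congrFun this j₀
    simp [hsj₀] at this
    linarith
end

section
/- Let K be a compact convex subset of ℝⁿ with 0 ∈ K, and let g_K be its gauge function. Then (1/n!)·∫_{ℝⁿ} e^{−g_K(x)} dx = Vₙ(K), where Vₙ is n-dimensional Lebesgue measure. -/
open Pointwise MeasureTheory

/-- `e^{-y}` for `y : EReal`, with the convention `e^{-⊤} = 0`. -/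
noncomputable def expNeg (y : EReal) : ℝ :=
  if y = ⊤ then 0 else Real.exp (-(y.toReal))

/-- The gauge (Minkowski) function of `K`, with values in `(−∞, +∞]`. -/
noncomputable def gaugeE {n : ℕ} (K : Set (EuclideanSpace ℝ (Fin n)))
    (x : EuclideanSpace ℝ (Fin n)) : EReal :=
  ⨅ (l : ℝ) (_ : 0 < l) (_ : x ∈ l • K), (l : EReal)

open Set Real

section Aux

variable {n : ℕ} {K : Set (EuclideanSpace ℝ (Fin n))}

lemma expNeg_nonneg (y : EReal) : 0 ≤ expNeg y := by
  unfold expNeg; split_ifs <;> positivity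

/-- upward closedness -/
lemma mem_smul_upward (hKconv : Convex ℝ K) (h0K : (0 : EuclideanSpace ℝ (Fin n)) ∈ K)
    {x : EuclideanSpace ℝ (Fin n)} {s t : ℝ} (hs : 0 < s) (hst : s ≤ t)
    (hx : x ∈ s • K) : x ∈ t • K := by
  obtain ⟨k, hk, rfl⟩ := hx
  have ht : 0 < t := lt_of_lt_of_le hs hst
  refine ⟨(s / t) • k, ?_, ?_⟩
  · have h1 : 0 ≤ s / t := by positivity
    have h2 : 0 ≤ 1 - s / t := by
      have : s / t ≤ 1 := (div_le_one ht).mpr hst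
      linarith
    have := hKconv hk h0K h1 h2 (by ring)
    simpa using this
  · simp only [smul_smul]
    congr 1
    field_simp

lemma gaugeE_le {x : EuclideanSpace ℝ (Fin n)} {l : ℝ} (hl : 0 < l) (hx : x ∈ l • K) :
    gaugeE K x ≤ (l : EReal) := by
  rw [gaugeE]
  exact iInf_le_of_le l (iInf_le_of_le hl (iInf_le _ hx))

lemma gaugeE_nonneg (x : EuclideanSpace ℝ (Fin n)) : (0 : EReal) ≤ gaugeE K x := by
  rw [gaugeE]
  refine le_iInf fun l => le_iInf fun hl => le_iInf fun _ => ?_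
  exact_mod_cast hl.le

lemma gaugeE_eq_top {x : EuclideanSpace ℝ (Fin n)}
    (h : ∀ l : ℝ, 0 < l → x ∉ l • K) : gaugeE K x = ⊤ := by
  rw [gaugeE, iInf_eq_top]
  intro l
  rcases lt_or_ge 0 l with hl | hl
  · rw [iInf_pos hl, iInf_neg (h l hl)]
  · exact iInf_neg (not_lt.mpr hl)

/-- `∫⁻ s in Ioi g, e^{-s} = e^{-g}` -/
lemma lint_exp (g : ℝ) :
    ∫⁻ s in Ioi g, ENNReal.ofReal (Real.exp (-s)) = ENNReal.ofReal (Real.exp (-g)) := by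
  have hint : IntegrableOn (fun s : ℝ => Real.exp (-s)) (Ioi g) := by
    have := exp_neg_integrableOn_Ioi g (one_pos)
    simpa using this
  rw [← ofReal_integral_eq_lintegral_ofReal hint
      (Filter.Eventually.of_forall fun s => (Real.exp_pos _).le)]
  rw [integral_exp_neg_Ioi]

/-- `∫⁻ s in Ioi 0, e^{-s} s^n = n!` -/
lemma lint_gamma (n : ℕ) :
    ∫⁻ s in Ioi (0:ℝ), ENNReal.ofReal (Real.exp (-s) * s ^ n)
      = ENNReal.ofReal (Nat.factorial n) := by
  have hpos : (0:ℝ) < (n:ℝ) + 1 := by positivity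
  have hint : IntegrableOn (fun s : ℝ => Real.exp (-s) * s ^ ((n:ℝ) + 1 - 1)) (Ioi 0) :=
    Real.GammaIntegral_convergent hpos
  have hcongr : ∀ s ∈ Ioi (0:ℝ), Real.exp (-s) * s ^ ((n:ℝ) + 1 - 1) = Real.exp (-s) * s ^ n := by
    intro s _
    have : ((n:ℝ) + 1 - 1) = (n:ℝ) := by ring
    rw [this, Real.rpow_natCast]
  have hint' : IntegrableOn (fun s : ℝ => Real.exp (-s) * s ^ n) (Ioi 0) := by
    refine hint.congr_fun hcongr measurableSet_Ioi
  rw [← ofReal_integral_eq_lintegral_ofReal hint' ?_]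
  · congr 1
    have h1 : ∫ s in Ioi (0:ℝ), Real.exp (-s) * s ^ n
        = ∫ s in Ioi (0:ℝ), Real.exp (-s) * s ^ ((n:ℝ) + 1 - 1) :=
      setIntegral_congr_fun measurableSet_Ioi (fun s hs => (hcongr s hs).symm)
    rw [h1, ← Real.Gamma_eq_integral hpos]
    exact_mod_cast Real.Gamma_nat_eq_factorial n
  · filter_upwards [self_mem_ae_restrict (measurableSet_Ioi : MeasurableSet (Ioi (0:ℝ)))]
      with s hs
    have : (0:ℝ) < s := hs
    positivity

end Aux

theorem stmt_16 {n : ℕ} (K : Set (EuclideanSpace ℝ (Fin n)))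
    (hKc : IsCompact K) (hKconv : Convex ℝ K) (h0K : (0 : EuclideanSpace ℝ (Fin n)) ∈ K) :
    (1 / (Nat.factorial n : ℝ)) * ∫ x, expNeg (gaugeE K x) = (volume K).toReal := by
  classical
  set A : Set (ℝ × (EuclideanSpace ℝ (Fin n))) := {p | 0 < p.1 ∧ p.2 ∈ p.1 • K} with hA_def
  have hKmeas : MeasurableSet K := hKc.measurableSet
  have hA : MeasurableSet A := by
    have h1 : A = {p : ℝ × EuclideanSpace ℝ (Fin n) | 0 < p.1} ∩ ((fun p : ℝ × (EuclideanSpace ℝ (Fin n)) => p.1⁻¹ • p.2) ⁻¹' K) := by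
      ext ⟨s, x⟩
      simp only [hA_def, mem_setOf_eq, mem_inter_iff, mem_preimage]
      constructor
      · rintro ⟨hs, hx⟩
        exact ⟨hs, (mem_smul_set_iff_inv_smul_mem₀ hs.ne' K x).mp hx⟩
      · rintro ⟨hs, hx⟩
        exact ⟨hs, (mem_smul_set_iff_inv_smul_mem₀ hs.ne' K x).mpr hx⟩
    rw [h1]
    exact (measurableSet_lt measurable_const measurable_fst).inter
      ((measurable_fst.inv.smul measurable_snd) hKmeas)
  set F : ℝ × EuclideanSpace ℝ (Fin n) → ENNReal := A.indicator (fun p => ENNReal.ofReal (Real.exp (-p.1))) with hF_def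
  have hF : Measurable F :=
    Measurable.indicator ((Real.measurable_exp.comp measurable_fst.neg).ennreal_ofReal) hA
  set G : EuclideanSpace ℝ (Fin n) → ENNReal := fun x => ∫⁻ s in Ioi (0:ℝ), F (s, x) with hG_def
  -- key pointwise identity
  have key : ∀ x : EuclideanSpace ℝ (Fin n), G x = ENNReal.ofReal (expNeg (gaugeE K x)) := by
    intro x
    by_cases hS : ∀ l : ℝ, 0 < l → x ∉ l • K
    · have htop : gaugeE K x = ⊤ := gaugeE_eq_top hS
      have : ∀ s : ℝ, F (s, x) = 0 := by
        intro s
        apply indicator_of_notMem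
        rintro ⟨hs, hx⟩
        exact hS s hs hx
      simp [hG_def, htop, expNeg, this]
    · push_neg at hS
      obtain ⟨l₀, hl₀, hxl₀⟩ := hS
      have hne_top : gaugeE K x ≠ ⊤ :=
        ne_top_of_le_ne_top (EReal.coe_ne_top l₀) (gaugeE_le hl₀ hxl₀)
      have hne_bot : gaugeE K x ≠ ⊥ :=
        ne_bot_of_le_ne_bot (by simp) (gaugeE_nonneg x)
      set g : ℝ := (gaugeE K x).toReal with hg_def
      have hcoe : ((g : ℝ) : EReal) = gaugeE K x := EReal.coe_toReal hne_top hne_bot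
      have hg0 : 0 ≤ g := by
        have := gaugeE_nonneg (K := K) x
        rw [← hcoe] at this
        exact_mod_cast this
      have hexp : expNeg (gaugeE K x) = Real.exp (-g) := by
        rw [expNeg, if_neg hne_top]
      -- S ⊆ Ici g
      have hS1 : ∀ l : ℝ, 0 < l → x ∈ l • K → g ≤ l := by
        intro l hl hx
        have := gaugeE_le hl hx
        rw [← hcoe] at this
        exact_mod_cast this
      -- Ioi g ⊆ S
      have hS2 : ∀ t : ℝ, g < t → (0 < t ∧ x ∈ t • K) := by
        intro t ht
        have ht0 : 0 < t := lt_of_le_of_lt hg0 ht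
        have hlt : gaugeE K x < (t : EReal) := by
          rw [← hcoe]; exact_mod_cast ht
        rw [gaugeE, iInf_lt_iff] at hlt
        obtain ⟨l, hlt⟩ := hlt
        rw [iInf_lt_iff] at hlt
        obtain ⟨hl, hlt⟩ := hlt
        rw [iInf_lt_iff] at hlt
        obtain ⟨hxl, hlt⟩ := hlt
        have hlt' : l < t := by exact_mod_cast hlt
        exact ⟨ht0, mem_smul_upward hKconv h0K hl hlt'.le hxl⟩
      -- a.e. equality of indicators on Ioi 0
      have hcongr : G x = ∫⁻ s in Ioi (0:ℝ),
          (Ioi g).indicator (fun s => ENNReal.ofReal (Real.exp (-s))) s := by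
        rw [hG_def]
        refine lintegral_congr_ae ?_
        have hg_null : (volume.restrict (Ioi (0:ℝ))) {g} = 0 := by
          rw [Measure.restrict_apply (measurableSet_singleton g)]
          exact measure_mono_null (inter_subset_left) (measure_singleton g)
        filter_upwards [measure_eq_zero_iff_ae_notMem.mp hg_null,
          self_mem_ae_restrict (measurableSet_Ioi : MeasurableSet (Ioi (0:ℝ)))]
          with s hsg hs0
        have hsg' : s ≠ g := by simpa using hsg
        by_cases hmem : s ∈ Ioi g
        · have hsA : (s, x) ∈ A := by
            obtain ⟨h1, h2⟩ := hS2 s hmem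
            exact ⟨h1, h2⟩
          rw [hF_def, indicator_of_mem hsA, indicator_of_mem hmem]
        · have hsA : (s, x) ∉ A := by
            rintro ⟨h1, h2⟩
            have := hS1 s h1 h2
            have : s = g := le_antisymm (not_lt.mp hmem) this
            exact hsg' this
          rw [hF_def, indicator_of_notMem hsA, indicator_of_notMem hmem]
      rw [hcongr, lintegral_indicator measurableSet_Ioi, Measure.restrict_restrict measurableSet_Ioi]
      have hIoi : Ioi g ∩ Ioi (0:ℝ) = Ioi g := by
        rw [Set.Ioi_inter_Ioi, max_eq_left hg0]
      rw [hIoi, lint_exp, hexp]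
  -- measurability of G
  have hG : Measurable G := by
    have : Measurable (Function.uncurry fun (x : (EuclideanSpace ℝ (Fin n))) (s : ℝ) => F (s, x)) := by
      apply hF.comp
      exact measurable_snd.prodMk measurable_fst
    exact Measurable.lintegral_prod_right this
  -- Tonelli
  have hswap : ∫⁻ x, G x = ∫⁻ s in Ioi (0:ℝ), ∫⁻ x, F (s, x) := by
    refine lintegral_lintegral_swap ?_
    exact (hF.comp (measurable_snd.prodMk measurable_fst)).aemeasurable
  -- inner integral
  have hinner : ∀ s ∈ Ioi (0:ℝ),
      ∫⁻ x, F (s, x) = ENNReal.ofReal (Real.exp (-s) * s ^ n) * volume K := by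
    intro s hs
    have hs0 : (0:ℝ) < s := hs
    have hKs : MeasurableSet (s • K) := by
      have : IsCompact (s • K) := hKc.smul s
      exact this.measurableSet
    have heq : ∀ x : EuclideanSpace ℝ (Fin n), F (s, x) = (s • K).indicator (fun _ => ENNReal.ofReal (Real.exp (-s))) x := by
      intro x
      by_cases hx : x ∈ s • K
      · have hsA : (s, x) ∈ A := ⟨hs0, hx⟩
        rw [hF_def, indicator_of_mem hsA, indicator_of_mem hx]
      · have hsA : (s, x) ∉ A := fun h => hx h.2
        rw [hF_def, indicator_of_notMem hsA, indicator_of_notMem hx]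
    simp_rw [heq]
    rw [lintegral_indicator hKs, setLIntegral_const]
    have hvol : volume (s • K) = ENNReal.ofReal (s ^ n) * volume K := by
      rw [Measure.addHaar_smul, finrank_euclideanSpace_fin]
      congr 2
      exact abs_of_nonneg (by positivity)
    rw [hvol, ← mul_assoc, ← ENNReal.ofReal_mul (Real.exp_pos _).le]
  -- total lintegral
  have htotal : ∫⁻ x, ENNReal.ofReal (expNeg (gaugeE K x))
      = ENNReal.ofReal (Nat.factorial n) * volume K := by
    have h1 : ∫⁻ x, ENNReal.ofReal (expNeg (gaugeE K x)) = ∫⁻ x, G x := by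
      refine lintegral_congr fun x => (key x).symm
    rw [h1, hswap, setLIntegral_congr_fun measurableSet_Ioi
      hinner, lintegral_mul_const _
      (show Measurable fun s : ℝ => ENNReal.ofReal (Real.exp (-s) * s ^ n) by fun_prop), lint_gamma]
  -- convert to Bochner integral
  have hf_eq : (fun x : (EuclideanSpace ℝ (Fin n)) => expNeg (gaugeE K x)) = fun x => (G x).toReal := by
    funext x
    rw [key x, ENNReal.toReal_ofReal (expNeg_nonneg _)]
  have hmeas : AEStronglyMeasurable (fun x : (EuclideanSpace ℝ (Fin n)) => expNeg (gaugeE K x)) volume := by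
    rw [hf_eq]
    exact (hG.ennreal_toReal).aestronglyMeasurable
  have hint : ∫ x, expNeg (gaugeE K x)
      = (∫⁻ x, ENNReal.ofReal (expNeg (gaugeE K x))).toReal :=
    integral_eq_lintegral_of_nonneg_ae
      (Filter.Eventually.of_forall fun x => expNeg_nonneg _) hmeas
  rw [hint, htotal, ENNReal.toReal_mul, ENNReal.toReal_ofReal (by positivity)]
  have hfact : (Nat.factorial n : ℝ) ≠ 0 := by positivity
  field_simp
end
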